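/- For all positive integers i and j and all continuous functions f, g : [0,1] → ℝ, one has ∫₀¹ (q·f(q) + (1−q)·g(q)) dβ_{i,j}(q) = (i/(i+j))·∫₀¹ f(q) dβ_{i+1,j}(q) + (j/(i+j))·∫₀¹ g(q) dβ_{i,j+1}(q). (This is the conjugate-prior relationship between the Beta and Bernoulli distributions, the conjugacy axiom of the Beta-Bernoulli theory.) -/

import Mathlib

open MeasureTheory

/-- The normalizing constant `B(i,j) = (i-1)!(j-1)!/(i+j-1)!` of the Beta distribution. -/
noncomputable def betaB (i j : ℕ) : ℝ :=
  (((i - 1).factorial : ℝ) * ((j - 1).factorial : ℝ)) / ((i + j - 1).factorial : ℝ)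

/-- The Beta(i,j) probability measure on `[0,1] ⊆ ℝ`, given by the density
`p ↦ p^(i-1) (1-p)^(j-1) / B(i,j)` with respect to Lebesgue measure on `[0,1]`. -/
noncomputable def betaMeasure (i j : ℕ) : Measure ℝ :=
  (volume.restrict (Set.Icc (0:ℝ) 1)).withDensity
    (fun p => ENNReal.ofReal (p ^ (i - 1) * (1 - p) ^ (j - 1) / betaB i j))

lemma betaB_pos (i j : ℕ) : 0 < betaB i j := by
  unfold betaB
  have h1 : (0:ℝ) < ((i - 1).factorial : ℝ) := by exact_mod_cast Nat.factorial_pos _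
  have h2 : (0:ℝ) < ((j - 1).factorial : ℝ) := by exact_mod_cast Nat.factorial_pos _
  have h3 : (0:ℝ) < ((i + j - 1).factorial : ℝ) := by exact_mod_cast Nat.factorial_pos _
  exact div_pos (mul_pos h1 h2) h3

lemma integral_betaMeasure (a b : ℕ) (h : ℝ → ℝ) :
    ∫ q, h q ∂(betaMeasure a b)
      = ∫ q in Set.Icc (0:ℝ) 1, (q ^ (a - 1) * (1 - q) ^ (b - 1) / betaB a b) * h q := by
  have hmeas : Measurable fun p : ℝ =>
      Real.toNNReal (p ^ (a - 1) * (1 - p) ^ (b - 1) / betaB a b) := by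
    apply Measurable.real_toNNReal
    exact ((measurable_id.pow_const _).mul
      ((measurable_const.sub measurable_id).pow_const _)).div_const _
  rw [betaMeasure]
  have : (fun p : ℝ => ENNReal.ofReal (p ^ (a - 1) * (1 - p) ^ (b - 1) / betaB a b))
      = fun p : ℝ => ((Real.toNNReal (p ^ (a - 1) * (1 - p) ^ (b - 1) / betaB a b) : NNReal) : ENNReal) := rfl
  rw [this, integral_withDensity_eq_integral_smul hmeas]
  refine setIntegral_congr_fun measurableSet_Icc fun q hq => ?_
  have h1 : (0:ℝ) ≤ q ^ (a - 1) * (1 - q) ^ (b - 1) / betaB a b := by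
    apply div_nonneg (mul_nonneg (pow_nonneg hq.1 _) (pow_nonneg (by linarith [hq.2]) _))
      (betaB_pos a b).le
  simp [NNReal.smul_def, Real.coe_toNNReal _ h1]

lemma betaB_succ_left (i j : ℕ) (hi : 1 ≤ i) (hj : 1 ≤ j) :
    betaB (i + 1) j = ((i : ℝ) / ((i : ℝ) + j)) * betaB i j := by
  obtain ⟨i, rfl⟩ := Nat.exists_eq_add_of_le hi
  obtain ⟨j, rfl⟩ := Nat.exists_eq_add_of_le hj
  unfold betaB
  have h1 : 1 + i + 1 - 1 = i + 1 := by omega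
  have h2 : 1 + i + 1 + (1 + j) - 1 = (1 + i + (1 + j) - 1) + 1 := by omega
  have h3 : 1 + i - 1 = i := by omega
  have h4 : 1 + j - 1 = j := by omega
  rw [h1, h2, h3, h4, Nat.factorial_succ, Nat.factorial_succ]
  have h5 : 1 + i + (1 + j) - 1 = i + 1 + j := by omega
  rw [h5]
  have hfac : (0:ℝ) < ((i + 1 + j).factorial : ℝ) := by exact_mod_cast Nat.factorial_pos _
  field_simp
  push_cast
  ring

lemma betaB_succ_right (i j : ℕ) (hi : 1 ≤ i) (hj : 1 ≤ j) :
    betaB i (j + 1) = ((j : ℝ) / ((i : ℝ) + j)) * betaB i j := by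
  obtain ⟨i, rfl⟩ := Nat.exists_eq_add_of_le hi
  obtain ⟨j, rfl⟩ := Nat.exists_eq_add_of_le hj
  unfold betaB
  have h1 : 1 + j + 1 - 1 = j + 1 := by omega
  have h2 : 1 + i + (1 + j + 1) - 1 = (1 + i + (1 + j) - 1) + 1 := by omega
  have h3 : 1 + i - 1 = i := by omega
  have h4 : 1 + j - 1 = j := by omega
  rw [h1, h2, h3, h4, Nat.factorial_succ, Nat.factorial_succ]
  have h5 : 1 + i + (1 + j) - 1 = i + 1 + j := by omega
  rw [h5]
  field_simp
  push_cast
  ring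

/-- Conjugacy: `∫ (q f(q) + (1-q) g(q)) dβ_{i,j} = i/(i+j) ∫ f dβ_{i+1,j} + j/(i+j) ∫ g dβ_{i,j+1}`. -/
theorem beta_bernoulli_conjugacy (i j : ℕ) (hi : 1 ≤ i) (hj : 1 ≤ j)
    (f g : ℝ → ℝ) (hf : ContinuousOn f (Set.Icc 0 1)) (hg : ContinuousOn g (Set.Icc 0 1)) :
    ∫ q, (q * f q + (1 - q) * g q) ∂(betaMeasure i j)
      = ((i : ℝ) / ((i : ℝ) + j)) * ∫ q, f q ∂(betaMeasure (i + 1) j)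
        + ((j : ℝ) / ((i : ℝ) + j)) * ∫ q, g q ∂(betaMeasure i (j + 1)) := by
  rw [integral_betaMeasure, integral_betaMeasure, integral_betaMeasure]
  have hij : (0:ℝ) < (i : ℝ) + j := by positivity
  have hi0 : (0:ℝ) < (i : ℝ) := by exact_mod_cast hi
  have hj0 : (0:ℝ) < (j : ℝ) := by exact_mod_cast hj
  -- pointwise identity
  have key : ∀ q : ℝ,
      (q ^ (i - 1) * (1 - q) ^ (j - 1) / betaB i j) * (q * f q + (1 - q) * g q)
        = ((i : ℝ) / ((i : ℝ) + j)) *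
            ((q ^ (i + 1 - 1) * (1 - q) ^ (j - 1) / betaB (i + 1) j) * f q)
          + ((j : ℝ) / ((i : ℝ) + j)) *
            ((q ^ (i - 1) * (1 - q) ^ (j + 1 - 1) / betaB i (j + 1)) * g q) := by
    intro q
    rw [betaB_succ_left i j hi hj, betaB_succ_right i j hi hj]
    have e1 : q ^ (i + 1 - 1) = q ^ (i - 1) * q := by
      rw [← pow_succ]; congr 1; omega
    have e2 : (1 - q) ^ (j + 1 - 1) = (1 - q) ^ (j - 1) * (1 - q) := by
      rw [← pow_succ]; congr 1; omega
    rw [e1, e2]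
    have hB := betaB_pos i j
    field_simp
  calc ∫ q in Set.Icc (0:ℝ) 1,
        (q ^ (i - 1) * (1 - q) ^ (j - 1) / betaB i j) * (q * f q + (1 - q) * g q)
      = ∫ q in Set.Icc (0:ℝ) 1,
        (((i : ℝ) / ((i : ℝ) + j)) *
            ((q ^ (i + 1 - 1) * (1 - q) ^ (j - 1) / betaB (i + 1) j) * f q)
          + ((j : ℝ) / ((i : ℝ) + j)) *
            ((q ^ (i - 1) * (1 - q) ^ (j + 1 - 1) / betaB i (j + 1)) * g q)) := by
        exact integral_congr_ae (Filter.Eventually.of_forall fun q => key q)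
    _ = ((i : ℝ) / ((i : ℝ) + j)) * (∫ q in Set.Icc (0:ℝ) 1,
            (q ^ (i + 1 - 1) * (1 - q) ^ (j - 1) / betaB (i + 1) j) * f q)
        + ((j : ℝ) / ((i : ℝ) + j)) * (∫ q in Set.Icc (0:ℝ) 1,
            (q ^ (i - 1) * (1 - q) ^ (j + 1 - 1) / betaB i (j + 1)) * g q) := by
        have hint1 : IntegrableOn (fun q : ℝ =>
            ((i : ℝ) / ((i : ℝ) + j)) *
              ((q ^ (i + 1 - 1) * (1 - q) ^ (j - 1) / betaB (i + 1) j) * f q))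
            (Set.Icc 0 1) volume := by
          apply ContinuousOn.integrableOn_Icc
          exact (continuousOn_const.mul
            (((((continuousOn_pow _).mul ((continuous_const.sub continuous_id).pow _).continuousOn).div_const _).mul hf)))
        have hint2 : IntegrableOn (fun q : ℝ =>
            ((j : ℝ) / ((i : ℝ) + j)) *
              ((q ^ (i - 1) * (1 - q) ^ (j + 1 - 1) / betaB i (j + 1)) * g q))
            (Set.Icc 0 1) volume := by
          apply ContinuousOn.integrableOn_Icc
          exact (continuousOn_const.mul
            (((((continuousOn_pow _).mul ((continuous_const.sub continuous_id).pow _).continuousOn).div_const _).mul hg)))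
        rw [integral_add hint1 hint2, integral_const_mul, integral_const_mul]
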